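/- Fix p ∈ (1,∞). The function H* attains its minimum over [0,1]² at the point v̂ = (v̂₁, v̂₂) where v̂₁ = (1/2) · (1/(2^{p/(p−1)} − 1))^{1/p} and v̂₂ = 1/2; that is, H*(v̂) ≤ H*(f) for all f ∈ [0,1]². -/

import Mathlib

/-- The limiting objective `H*` on `[0,1]²`. -/
noncomputable def Hstar (p : ℝ) (f : ℝ × ℝ) : ℝ :=
  -f.1 + (f.1 ^ p + (1 - f.2) ^ p) ^ (1 / p) + (f.1 ^ p + f.2 ^ p) ^ (1 / p) - 1

/-- Two-term Hölder inequality with unit dual weight. -/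
lemma holder_two {p q a b x y : ℝ} (hpq : p.HolderConjugate q)
    (ha : 0 ≤ a) (hb : 0 ≤ b) (hx : 0 ≤ x) (hy : 0 ≤ y)
    (hab : a ^ q + b ^ q = 1) :
    a * x + b * y ≤ (x ^ p + y ^ p) ^ (1 / p) := by
  have hp0 : 0 < p := hpq.pos
  have hs0 : 0 ≤ x ^ p + y ^ p :=
    add_nonneg (Real.rpow_nonneg hx p) (Real.rpow_nonneg hy p)
  rcases eq_or_lt_of_le hs0 with hs | hs
  · have hxp : x ^ p = 0 := by
      have := Real.rpow_nonneg hx p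
      have := Real.rpow_nonneg hy p
      linarith
    have hyp : y ^ p = 0 := by
      have := Real.rpow_nonneg hx p
      linarith
    have hx0 : x = 0 := by
      rwa [Real.rpow_eq_zero hx hp0.ne'] at hxp
    have hy0 : y = 0 := by
      rwa [Real.rpow_eq_zero hy hp0.ne'] at hyp
    simp only [hx0, hy0, mul_zero, add_zero, ← hs]
    positivity
  · set s := x ^ p + y ^ p with hsdef
    set c := s ^ (1 / p) with hcdef
    have hc0 : 0 < c := Real.rpow_pos_of_pos hs _
    have hcp : c ^ p = s := by
      rw [hcdef, ← Real.rpow_mul hs.le, one_div, inv_mul_cancel₀ hp0.ne', Real.rpow_one]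
    have h1 : a * (x / c) ≤ (x / c) ^ p / p + a ^ q / q := by
      have := Real.young_inequality_of_nonneg (div_nonneg hx hc0.le) ha hpq
      linarith [this]
    have h2 : b * (y / c) ≤ (y / c) ^ p / p + b ^ q / q := by
      have := Real.young_inequality_of_nonneg (div_nonneg hy hc0.le) hb hpq
      linarith [this]
    have hxc : (x / c) ^ p = x ^ p / s := by
      rw [Real.div_rpow hx hc0.le, hcp]
    have hyc : (y / c) ^ p = y ^ p / s := by
      rw [Real.div_rpow hy hc0.le, hcp]
    have hsum : a * (x / c) + b * (y / c) ≤ 1 := by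
      have hps : (x ^ p / s) / p + (y ^ p / s) / p = 1 / p := by
        field_simp; exact hsdef.symm
      have hq : a ^ q / q + b ^ q / q = 1 / q := by
        rw [← add_div, hab]
      have hconj := hpq.inv_add_inv_eq_one
      rw [← one_div, ← one_div] at hconj
      have hps' : (x / c) ^ p / p + (y / c) ^ p / p = 1 / p := by
        rw [hxc, hyc]; exact hps
      linarith [h1, h2, hps', hq]
    calc a * x + b * y = (a * (x / c) + b * (y / c)) * c := by field_simp
      _ ≤ 1 * c := by exact mul_le_mul_of_nonneg_right hsum hc0.le
      _ = c := one_mul c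

theorem stmt_7 (p : ℝ) (hp : 1 < p) :
    ((1 / 2 * (1 / ((2 : ℝ) ^ (p / (p - 1)) - 1)) ^ (1 / p), (1 : ℝ) / 2) ∈
      Set.Icc (0 : ℝ) 1 ×ˢ Set.Icc (0 : ℝ) 1) ∧
    ∀ f ∈ Set.Icc (0 : ℝ) 1 ×ˢ Set.Icc (0 : ℝ) 1,
      Hstar p (1 / 2 * (1 / ((2 : ℝ) ^ (p / (p - 1)) - 1)) ^ (1 / p), (1 : ℝ) / 2) ≤
        Hstar p f := by
  set q := p / (p - 1) with hqdef
  have hpq : p.HolderConjugate q := Real.HolderConjugate.conjExponent hp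
  have hp0 : 0 < p := hpq.pos
  have hq1 : 1 < q := hpq.symm.lt
  have hq0 : 0 < q := hpq.symm.pos
  have h2q : (2 : ℝ) < 2 ^ q := by
    calc (2 : ℝ) = 2 ^ (1 : ℝ) := by rw [Real.rpow_one]
    _ < 2 ^ q := Real.rpow_lt_rpow_of_exponent_lt one_lt_two hq1
  set A := (2 : ℝ) ^ q - 1 with hAdef
  have hA1 : 1 < A := by linarith
  have hA0 : 0 < A := by linarith
  set t := (1 / A) ^ (1 / p) with htdef
  have ht0 : 0 < t := Real.rpow_pos_of_pos (by positivity) _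
  have ht1 : t ≤ 1 := Real.rpow_le_one (by positivity) (by
      rw [div_le_one hA0]; linarith) (by positivity)
  -- dual weight b
  set b := (1 - (1 / 2 : ℝ) ^ q) ^ (1 / q) with hbdef
  have hhalfq : ((1 : ℝ) / 2) ^ q = 1 / 2 ^ q := by
    rw [Real.div_rpow zero_le_one (by norm_num), Real.one_rpow]
  have hhq1 : (1 - (1 / 2 : ℝ) ^ q) = A / 2 ^ q := by
    rw [hhalfq]; field_simp; exact hAdef.symm
  have hb0 : 0 ≤ b := Real.rpow_nonneg (by rw [hhq1]; positivity) _
  have hbq : b ^ q = 1 - (1 / 2 : ℝ) ^ q := by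
    rw [hbdef, ← Real.rpow_mul (by rw [hhq1]; positivity),
      one_div_mul_cancel hq0.ne', Real.rpow_one]
  have hab : ((1 : ℝ) / 2) ^ q + b ^ q = 1 := by rw [hbq]; ring
  -- key identity: b = A ^ (1/q) / 2
  have hbA : b = A ^ (1 / q) / 2 := by
    rw [hbdef, hhq1, Real.div_rpow hA0.le (by positivity),
      ← Real.rpow_mul (by norm_num : (0:ℝ) ≤ 2), mul_one_div, div_self hq0.ne',
      Real.rpow_one]
  -- value at the candidate minimizer
  have hval : Hstar p (1 / 2 * t, (1 : ℝ) / 2) = b - 1 := by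
    have hhalf : (1 : ℝ) - 1 / 2 = 1 / 2 := by norm_num
    have hv1p : (1 / 2 * t) ^ p = (1 / 2 : ℝ) ^ p * (1 / A) := by
      rw [Real.mul_rpow (by norm_num) ht0.le, htdef,
        ← Real.rpow_mul (by positivity), one_div_mul_cancel hp0.ne',
        Real.rpow_one]
    have hsum : (1 / 2 * t) ^ p + (1 / 2 : ℝ) ^ p = (1 / 2 : ℝ) ^ p * (2 ^ q / A) := by
      rw [hv1p]
      have : (2:ℝ) ^ q / A = 1 / A + 1 := by rw [div_add_one hA0.ne', hAdef]; ring
      rw [this]; ring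
    have hqp : q * (1 / p) = q - 1 := by
      have h := hpq.inv_add_inv_eq_one
      rw [← one_div, ← one_div] at h
      have : 1 / p = 1 - 1 / q := by linarith
      rw [this]
      field_simp
    have hterm : ((1 / 2 * t) ^ p + (1 / 2 : ℝ) ^ p) ^ (1 / p)
        = (2 ^ q / 2) * (1 / 2 * t) := by
      rw [hsum, Real.mul_rpow (by positivity) (by positivity),
        ← Real.rpow_mul (by norm_num : (0:ℝ) ≤ 1/2), mul_one_div, div_self hp0.ne',
        Real.rpow_one, Real.div_rpow (by positivity : (0:ℝ) ≤ 2 ^ q) hA0.le,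
        ← Real.rpow_mul (by norm_num : (0:ℝ) ≤ 2), hqp, Real.rpow_sub (by norm_num : (0:ℝ) < 2),
        Real.rpow_one]
      have hArw : A ^ (1 / p) = 1 / t := by
        rw [htdef, Real.div_rpow zero_le_one hA0.le, Real.one_rpow, one_div_one_div]
      rw [hArw]
      field_simp
    have hAt : A * t = A ^ (1 / q) := by
      have h1p : 1 - 1 / p = 1 / q := by
        have h := hpq.inv_add_inv_eq_one
        rw [← one_div, ← one_div] at h
        linarith
      rw [htdef, Real.div_rpow zero_le_one hA0.le, Real.one_rpow,
        ← h1p, Real.rpow_sub hA0, Real.rpow_one]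
      field_simp
    show -(1 / 2 * t) + ((1 / 2 * t) ^ p + (1 - 1/2 : ℝ) ^ p) ^ (1 / p)
        + ((1 / 2 * t) ^ p + (1/2 : ℝ) ^ p) ^ (1 / p) - 1 = b - 1
    rw [hhalf, hterm, hbA, ← hAt]
    ring
  -- lower bound everywhere
  have hlow : ∀ f ∈ Set.Icc (0 : ℝ) 1 ×ˢ Set.Icc (0 : ℝ) 1, b - 1 ≤ Hstar p f := by
    rintro ⟨f1, f2⟩ ⟨⟨hf10, hf11⟩, hf20, hf21⟩
    have h1 : (1 / 2 : ℝ) * f1 + b * (1 - f2) ≤ (f1 ^ p + (1 - f2) ^ p) ^ (1 / p) :=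
      holder_two hpq (by norm_num) hb0 hf10 (by linarith) hab
    have h2 : (1 / 2 : ℝ) * f1 + b * f2 ≤ (f1 ^ p + f2 ^ p) ^ (1 / p) :=
      holder_two hpq (by norm_num) hb0 hf10 hf20 hab
    show b - 1 ≤ -f1 + (f1 ^ p + (1 - f2) ^ p) ^ (1 / p) + (f1 ^ p + f2 ^ p) ^ (1 / p) - 1
    nlinarith [h1, h2]
  constructor
  · constructor
    · constructor
      · positivity
      · calc (1:ℝ)/2 * t ≤ 1/2 * 1 := by linarith
        _ ≤ 1 := by norm_num
    · constructor <;> norm_num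
  · intro f hf
    calc Hstar p (1 / 2 * t, (1 : ℝ) / 2) = b - 1 := hval
      _ ≤ Hstar p f := hlow f hf
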